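/- Let H₁ and H₂ be real inner product spaces and let f : H₁ × H₂ → ℝ be differentiable with gradient ∇f on the product space (with the product inner product), where ∇f is L-Lipschitz (L > 0): ‖∇f(p) − ∇f(q)‖ ≤ L·‖p − q‖ for all p, q. For (x, y) write ∇ₓf(x,y) for the gradient at x of x ↦ f(x,y) and ∇_yf(x,y) for the gradient at y of y ↦ f(x,y). Assume f is bounded below by f*, let 0 < ηₓ < 2/L and 0 < η_y < 2/L, set d = min(ηₓ − L·ηₓ²/2, η_y − L·η_y²/2) > 0, and define sequences (xᵗ), (yᵗ) recursively by xᵗ⁺¹ = xᵗ − ηₓ·∇ₓf(xᵗ, yᵗ) and yᵗ⁺¹ = yᵗ − η_y·∇_yf(xᵗ⁺¹, yᵗ) for t ≥ T₁, starting from arbitrary x^{T₁}, y^{T₁}. Then for every T > T₁: (1/(T − T₁)) · Σ_{t=T₁}^{T−1} (‖∇ₓf(xᵗ, yᵗ)‖² + ‖∇_yf(xᵗ⁺¹, yᵗ)‖²) ≤ (f(x^{T₁}, y^{T₁}) − f*)/((T − T₁)·d). -/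

import Mathlib

open intervalIntegral in
lemma descent_lemma {E : Type*} [NormedAddCommGroup E] [InnerProductSpace ℝ E]
    [CompleteSpace E] (f : E → ℝ) (g : E → E) (L : ℝ) (hL : 0 ≤ L)
    (hgrad : ∀ p, HasGradientAt f (g p) p)
    (hlip : ∀ p q, ‖g p - g q‖ ≤ L * ‖p - q‖) (p q : E) :
    f q ≤ f p + inner ℝ (g p) (q - p) + L / 2 * ‖q - p‖ ^ 2 := by
  set v := q - p with hv
  have hgc : Continuous g := by
    refine (LipschitzWith.of_dist_le_mul (K := ⟨L, hL⟩) ?_).continuous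
    intro a b
    rw [dist_eq_norm, dist_eq_norm]; exact hlip a b
  have hline : ∀ t : ℝ, HasDerivAt (fun t : ℝ => f (p + t • v))
      (inner ℝ (g (p + t • v)) v) t := by
    intro t
    have h1 : HasDerivAt (fun t : ℝ => p + t • v) v t := by
      simpa using ((hasDerivAt_id t).smul_const v).const_add p
    have h2 := (hgrad (p + t • v)).hasFDerivAt.comp_hasDerivAt t h1
    simp only [InnerProductSpace.toDual_apply_apply] at h2
    exact h2
  have hcont : Continuous fun t : ℝ => (inner ℝ (g (p + t • v)) v : ℝ) := by
    exact (hgc.comp (continuous_const.add (continuous_id.smul continuous_const))).inner continuous_const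
  have key : f q - f p = ∫ t in (0:ℝ)..1, (inner ℝ (g (p + t • v)) v : ℝ) := by
    have := integral_eq_sub_of_hasDerivAt (fun t _ => hline t)
      (hcont.intervalIntegrable 0 1)
    simpa [hv] using this.symm
  have hbound : (∫ t in (0:ℝ)..1, (inner ℝ (g (p + t • v)) v : ℝ))
      ≤ inner ℝ (g p) v + L / 2 * ‖v‖ ^ 2 := by
    have hle : ∀ t ∈ Set.Icc (0:ℝ) 1,
        (inner ℝ (g (p + t • v)) v : ℝ) ≤ inner ℝ (g p) v + L * t * ‖v‖ ^ 2 := by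
      intro t ht
      have h1 : (inner ℝ (g (p + t • v)) v : ℝ)
          = inner ℝ (g p) v + inner ℝ (g (p + t • v) - g p) v := by
        rw [inner_sub_left]; ring
      have h2 : (inner ℝ (g (p + t • v) - g p) v : ℝ) ≤ ‖g (p + t • v) - g p‖ * ‖v‖ :=
        real_inner_le_norm _ _
      have h3 : ‖g (p + t • v) - g p‖ ≤ L * (t * ‖v‖) := by
        have := hlip (p + t • v) p
        simpa [norm_smul, abs_of_nonneg ht.1] using this
      have h4 : ‖g (p + t • v) - g p‖ * ‖v‖ ≤ L * (t * ‖v‖) * ‖v‖ :=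
        mul_le_mul_of_nonneg_right h3 (norm_nonneg _)
      nlinarith [norm_nonneg v]
    have hmono := integral_mono_on (μ := MeasureTheory.volume) (a := (0:ℝ)) (b := 1) (by norm_num)
      (hcont.intervalIntegrable 0 1)
      ((continuous_const.add ((continuous_const.mul continuous_id).mul
        continuous_const)).intervalIntegrable 0 1) hle
    calc (∫ t in (0:ℝ)..1, (inner ℝ (g (p + t • v)) v : ℝ))
        ≤ ∫ t in (0:ℝ)..1, (inner ℝ (g p) v + L * t * ‖v‖ ^ 2) := hmono
      _ = inner ℝ (g p) v + L / 2 * ‖v‖ ^ 2 := by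
          have h5 : ∀ t : ℝ, (inner ℝ (g p) v : ℝ) + L * t * ‖v‖ ^ 2
              = inner ℝ (g p) v + (L * ‖v‖ ^ 2) * t := fun t => by ring
          simp_rw [h5]
          rw [integral_add intervalIntegrable_const
            ((by fun_prop : Continuous fun t : ℝ => (L * ‖v‖ ^ 2) * t).intervalIntegrable 0 1),
            integral_const, integral_const_mul, integral_id]
          simp only [smul_eq_mul, one_mul]
          ring
  linarith [key ▸ hbound]

lemma grad_fst {H₁ H₂ : Type*} [NormedAddCommGroup H₁] [InnerProductSpace ℝ H₁] [CompleteSpace H₁]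
    [NormedAddCommGroup H₂] [InnerProductSpace ℝ H₂] [CompleteSpace H₂]
    (f : WithLp 2 (H₁ × H₂) → ℝ) (g : WithLp 2 (H₁ × H₂) → WithLp 2 (H₁ × H₂))
    (hgrad : ∀ p, HasGradientAt f (g p) p) (a : H₁) (b : H₂)
    (gxa : H₁)
    (hgx : HasGradientAt
      (fun x' => f ((WithLp.equiv 2 (H₁ × H₂)).symm (x', b))) gxa a) :
    gxa = (g ((WithLp.equiv 2 (H₁ × H₂)).symm (a, b))).fst := by
  set p := (WithLp.equiv 2 (H₁ × H₂)).symm (a, b) with hp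
  set B : H₁ →L[ℝ] WithLp 2 (H₁ × H₂) :=
    ((WithLp.prodContinuousLinearEquiv 2 ℝ H₁ H₂).symm.toContinuousLinearMap).comp
      (ContinuousLinearMap.inl ℝ H₁ H₂) with hB
  set c : WithLp 2 (H₁ × H₂) := (WithLp.equiv 2 (H₁ × H₂)).symm (0, b) with hc
  have hBc : ∀ x' : H₁, B x' + c = (WithLp.equiv 2 (H₁ × H₂)).symm (x', b) := by
    intro x'
    rw [Equiv.eq_symm_apply, WithLp.equiv_apply, WithLp.ofLp_add]
    simp [hB, hc, Prod.ext_iff]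
  have hBfst : ∀ v : H₁, (B v).fst = v := fun v => by
    simp [hB]
  have hBsnd : ∀ v : H₁, (B v).snd = 0 := fun v => by
    simp [hB]
  have hstep : HasFDerivAt (fun x' => f ((WithLp.equiv 2 (H₁ × H₂)).symm (x', b)))
      ((InnerProductSpace.toDual ℝ _ (g p)).comp B) a := by
    have h1 : HasFDerivAt (fun x' : H₁ => B x' + c) (B : H₁ →L[ℝ] _) a :=
      B.hasFDerivAt.add_const c
    have h2 := ((hgrad (B a + c)).hasFDerivAt).comp a h1
    rw [hBc a] at h2
    have : (fun x' : H₁ => f (B x' + c)) = fun x' => f ((WithLp.equiv 2 (H₁ × H₂)).symm (x', b)) := by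
      funext x'; rw [hBc x']
    rwa [← this]
  have heq : (InnerProductSpace.toDual ℝ _ (g p)).comp B
      = InnerProductSpace.toDual ℝ H₁ ((g p).fst) := by
    ext v
    simp [InnerProductSpace.toDual_apply_apply, WithLp.prod_inner_apply, hBfst, hBsnd]
  rw [heq] at hstep
  exact hgx.unique ((hasGradientAt_iff_hasFDerivAt).2 hstep)

lemma grad_snd {H₁ H₂ : Type*} [NormedAddCommGroup H₁] [InnerProductSpace ℝ H₁] [CompleteSpace H₁]
    [NormedAddCommGroup H₂] [InnerProductSpace ℝ H₂] [CompleteSpace H₂]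
    (f : WithLp 2 (H₁ × H₂) → ℝ) (g : WithLp 2 (H₁ × H₂) → WithLp 2 (H₁ × H₂))
    (hgrad : ∀ p, HasGradientAt f (g p) p) (a : H₁) (b : H₂)
    (gyb : H₂)
    (hgy : HasGradientAt
      (fun y' => f ((WithLp.equiv 2 (H₁ × H₂)).symm (a, y'))) gyb b) :
    gyb = (g ((WithLp.equiv 2 (H₁ × H₂)).symm (a, b))).snd := by
  set p := (WithLp.equiv 2 (H₁ × H₂)).symm (a, b) with hp
  set B : H₂ →L[ℝ] WithLp 2 (H₁ × H₂) :=
    ((WithLp.prodContinuousLinearEquiv 2 ℝ H₁ H₂).symm.toContinuousLinearMap).comp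
      (ContinuousLinearMap.inr ℝ H₁ H₂) with hB
  set c : WithLp 2 (H₁ × H₂) := (WithLp.equiv 2 (H₁ × H₂)).symm (a, 0) with hc
  have hBc : ∀ y' : H₂, B y' + c = (WithLp.equiv 2 (H₁ × H₂)).symm (a, y') := by
    intro y'
    rw [Equiv.eq_symm_apply, WithLp.equiv_apply, WithLp.ofLp_add]
    simp [hB, hc, Prod.ext_iff]
  have hBfst : ∀ v : H₂, (B v).fst = 0 := fun v => by
    simp [hB]
  have hBsnd : ∀ v : H₂, (B v).snd = v := fun v => by
    simp [hB]
  have hstep : HasFDerivAt (fun y' => f ((WithLp.equiv 2 (H₁ × H₂)).symm (a, y')))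
      ((InnerProductSpace.toDual ℝ _ (g p)).comp B) b := by
    have h1 : HasFDerivAt (fun y' : H₂ => B y' + c) (B : H₂ →L[ℝ] _) b :=
      B.hasFDerivAt.add_const c
    have h2 := ((hgrad (B b + c)).hasFDerivAt).comp b h1
    rw [hBc b] at h2
    have : (fun y' : H₂ => f (B y' + c)) = fun y' => f ((WithLp.equiv 2 (H₁ × H₂)).symm (a, y')) := by
      funext y'; rw [hBc y']
    rwa [← this]
  have heq : (InnerProductSpace.toDual ℝ _ (g p)).comp B
      = InnerProductSpace.toDual ℝ H₂ ((g p).snd) := by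
    ext v
    simp [InnerProductSpace.toDual_apply_apply, WithLp.prod_inner_apply, hBfst, hBsnd]
  rw [heq] at hstep
  exact hgy.unique ((hasGradientAt_iff_hasFDerivAt).2 hstep)

set_option maxHeartbeats 1000000

/-- Averaged stationarity bound for alternating gradient descent (Eq. (A.160)):
for an `L`-smooth `f` (on the ℓ²-product space) bounded below by `fstar`, with step sizes
`0 < ηx < 2/L`, `0 < ηy < 2/L` and `d = min (ηx - L·ηx²/2) (ηy - L·ηy²/2)`, the average of
the squared partial-gradient norms over iterations `T₁, …, T-1` is bounded by
`(f(x^{T₁}, y^{T₁}) - fstar) / ((T - T₁)·d)`. -/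
theorem alternating_descent_average_bound
    {H₁ H₂ : Type*} [NormedAddCommGroup H₁] [InnerProductSpace ℝ H₁] [CompleteSpace H₁]
    [NormedAddCommGroup H₂] [InnerProductSpace ℝ H₂] [CompleteSpace H₂]
    (f : WithLp 2 (H₁ × H₂) → ℝ) (g : WithLp 2 (H₁ × H₂) → WithLp 2 (H₁ × H₂)) (L : ℝ)
    (hL : 0 < L)
    (hgrad : ∀ p, HasGradientAt f (g p) p)
    (hlip : ∀ p q, ‖g p - g q‖ ≤ L * ‖p - q‖)
    (gx : H₁ → H₂ → H₁) (gy : H₁ → H₂ → H₂)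
    (hgx : ∀ x y, HasGradientAt
      (fun x' => f ((WithLp.equiv 2 (H₁ × H₂)).symm (x', y))) (gx x y) x)
    (hgy : ∀ x y, HasGradientAt
      (fun y' => f ((WithLp.equiv 2 (H₁ × H₂)).symm (x, y'))) (gy x y) y)
    (fstar : ℝ) (hbdd : ∀ p, fstar ≤ f p)
    (ηx ηy : ℝ) (hηx : 0 < ηx) (hηx2 : ηx < 2 / L) (hηy : 0 < ηy) (hηy2 : ηy < 2 / L)
    (T₁ : ℕ) (x : ℕ → H₁) (y : ℕ → H₂)
    (hx : ∀ t, T₁ ≤ t → x (t + 1) = x t - ηx • gx (x t) (y t))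
    (hy : ∀ t, T₁ ≤ t → y (t + 1) = y t - ηy • gy (x (t + 1)) (y t))
    (T : ℕ) (hT : T₁ < T) :
    (1 / ((T - T₁ : ℕ) : ℝ)) *
        ∑ t ∈ Finset.Ico T₁ T, (‖gx (x t) (y t)‖ ^ 2 + ‖gy (x (t + 1)) (y t)‖ ^ 2)
      ≤ (f ((WithLp.equiv 2 (H₁ × H₂)).symm (x T₁, y T₁)) - fstar) /
          (((T - T₁ : ℕ) : ℝ) * min (ηx - L * ηx ^ 2 / 2) (ηy - L * ηy ^ 2 / 2)) := by
  have hLx : ηx * L < 2 := (lt_div_iff₀ hL).mp hηx2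
  have hLy : ηy * L < 2 := (lt_div_iff₀ hL).mp hηy2
  have hdx : 0 < ηx - L * ηx ^ 2 / 2 := by nlinarith
  have hdy : 0 < ηy - L * ηy ^ 2 / 2 := by nlinarith
  set d := min (ηx - L * ηx ^ 2 / 2) (ηy - L * ηy ^ 2 / 2) with hd
  have hd0 : 0 < d := lt_min hdx hdy
  set P : ℕ → WithLp 2 (H₁ × H₂) := fun t => (WithLp.equiv 2 (H₁ × H₂)).symm (x t, y t) with hP
  set Q : ℕ → WithLp 2 (H₁ × H₂) :=
    fun t => (WithLp.equiv 2 (H₁ × H₂)).symm (x (t + 1), y t) with hQ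
  -- descent in x
  have stepx : ∀ t, T₁ ≤ t →
      f (Q t) ≤ f (P t) - (ηx - L * ηx ^ 2 / 2) * ‖gx (x t) (y t)‖ ^ 2 := by
    intro t ht
    have h := descent_lemma f g L hL.le hgrad hlip (P t) (Q t)
    have hdiff : Q t - P t
        = (WithLp.equiv 2 (H₁ × H₂)).symm (-(ηx • gx (x t) (y t)), 0) := by
      rw [hQ, hP]
      simp only [WithLp.equiv_symm_apply, ← WithLp.toLp_sub]
      congr 1
      rw [Prod.mk_sub_mk, hx t ht]
      simp
    have hgfst : (g (P t)).fst = gx (x t) (y t) :=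
      (grad_fst f g hgrad (x t) (y t) (gx (x t) (y t)) (hgx (x t) (y t))).symm
    have hinner : (inner ℝ (g (P t)) (Q t - P t) : ℝ)
        = -(ηx * ‖gx (x t) (y t)‖ ^ 2) := by
      rw [hdiff, WithLp.prod_inner_apply]
      simp [WithLp.equiv_symm_apply, WithLp.toLp_fst, WithLp.toLp_snd, hgfst,
        real_inner_smul_right, real_inner_self_eq_norm_sq]
    have hnorm : ‖Q t - P t‖ ^ 2 = ηx ^ 2 * ‖gx (x t) (y t)‖ ^ 2 := by
      rw [hdiff, WithLp.prod_norm_sq_eq_of_L2]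
      simp [WithLp.equiv_symm_apply, WithLp.toLp_fst, WithLp.toLp_snd, norm_smul,
        abs_of_pos hηx, mul_pow]
    rw [hinner, hnorm] at h
    nlinarith [h]
  -- descent in y
  have stepy : ∀ t, T₁ ≤ t →
      f (P (t + 1)) ≤ f (Q t) - (ηy - L * ηy ^ 2 / 2) * ‖gy (x (t + 1)) (y t)‖ ^ 2 := by
    intro t ht
    have h := descent_lemma f g L hL.le hgrad hlip (Q t) (P (t + 1))
    have hdiff : P (t + 1) - Q t
        = (WithLp.equiv 2 (H₁ × H₂)).symm (0, -(ηy • gy (x (t + 1)) (y t))) := by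
      rw [hQ, hP]
      simp only [WithLp.equiv_symm_apply, ← WithLp.toLp_sub]
      congr 1
      rw [Prod.mk_sub_mk, hy t ht]
      simp
    have hgsnd : (g (Q t)).snd = gy (x (t + 1)) (y t) :=
      (grad_snd f g hgrad (x (t + 1)) (y t) (gy (x (t + 1)) (y t))
        (hgy (x (t + 1)) (y t))).symm
    have hinner : (inner ℝ (g (Q t)) (P (t + 1) - Q t) : ℝ)
        = -(ηy * ‖gy (x (t + 1)) (y t)‖ ^ 2) := by
      rw [hdiff, WithLp.prod_inner_apply]
      simp [WithLp.equiv_symm_apply, WithLp.toLp_fst, WithLp.toLp_snd, hgsnd,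
        real_inner_smul_right, real_inner_self_eq_norm_sq]
    have hnorm : ‖P (t + 1) - Q t‖ ^ 2 = ηy ^ 2 * ‖gy (x (t + 1)) (y t)‖ ^ 2 := by
      rw [hdiff, WithLp.prod_norm_sq_eq_of_L2]
      simp [WithLp.equiv_symm_apply, WithLp.toLp_fst, WithLp.toLp_snd, norm_smul,
        abs_of_pos hηy, mul_pow]
    rw [hinner, hnorm] at h
    nlinarith [h]
  -- combined one-step descent
  have step : ∀ t, T₁ ≤ t →
      f (P (t + 1)) + d * (‖gx (x t) (y t)‖ ^ 2 + ‖gy (x (t + 1)) (y t)‖ ^ 2) ≤ f (P t) := by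
    intro t ht
    have h1 := stepx t ht
    have h2 := stepy t ht
    have h3 : d * ‖gx (x t) (y t)‖ ^ 2 ≤ (ηx - L * ηx ^ 2 / 2) * ‖gx (x t) (y t)‖ ^ 2 :=
      mul_le_mul_of_nonneg_right (min_le_left _ _) (sq_nonneg _)
    have h4 : d * ‖gy (x (t + 1)) (y t)‖ ^ 2
        ≤ (ηy - L * ηy ^ 2 / 2) * ‖gy (x (t + 1)) (y t)‖ ^ 2 :=
      mul_le_mul_of_nonneg_right (min_le_right _ _) (sq_nonneg _)
    nlinarith [h1, h2, h3, h4]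
  -- telescoping
  have tele : ∀ n, T₁ ≤ n →
      f (P n) + d * ∑ t ∈ Finset.Ico T₁ n,
        (‖gx (x t) (y t)‖ ^ 2 + ‖gy (x (t + 1)) (y t)‖ ^ 2) ≤ f (P T₁) := by
    intro n hn
    induction n, hn using Nat.le_induction with
    | base => simp
    | succ n hn ih =>
      rw [Finset.sum_Ico_succ_top hn, mul_add]
      have := step n hn
      linarith
  have hN : (0:ℝ) < ((T - T₁ : ℕ) : ℝ) := by
    have : 0 < T - T₁ := Nat.sub_pos_of_lt hT
    exact_mod_cast this
  have hS : 0 ≤ ∑ t ∈ Finset.Ico T₁ T,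
      (‖gx (x t) (y t)‖ ^ 2 + ‖gy (x (t + 1)) (y t)‖ ^ 2) :=
    Finset.sum_nonneg fun t _ => by positivity
  have hA : d * ∑ t ∈ Finset.Ico T₁ T,
      (‖gx (x t) (y t)‖ ^ 2 + ‖gy (x (t + 1)) (y t)‖ ^ 2) ≤ f (P T₁) - fstar := by
    have := tele T hT.le
    have := hbdd (P T)
    linarith
  rw [one_div, inv_mul_eq_div, div_le_div_iff₀ hN (by positivity)]
  nlinarith [mul_le_mul_of_nonneg_left hA hN.le, hS, hN, hd0]
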